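/- For the multi-marginal entropic optimal transport problem with star-shaped cost c(x¹,...,xᵐ) = ∑_{i=2}^m w(x¹,xⁱ) and regularization parameter η > 0, the unique minimizer γ̄ of γ ↦ ∑_x c(x)γ_x + η H_{⊗μⁱ}(γ) over Π(μ¹,...,μᵐ) is the measure obtained by gluing the optimal two-marginal regularized plans π̄ⁱ along the common first marginal: γ̄(x¹,...,xᵐ) = μ¹_{x¹} · ∏_{i=2}^m (π̄ⁱ(x¹,xⁱ)/μ¹_{x¹}), where each π̄ⁱ minimizes π ↦ ∑_{x¹,xⁱ} w(x¹,xⁱ)π(x¹,xⁱ) + η H_{μ¹⊗μⁱ}(π) over Π(μ¹,μⁱ). -/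

import Mathlib

set_option linter.unusedSectionVars false
set_option maxHeartbeats 1000000

lemma ot_log_le {a b : ℝ} (ha : 0 ≤ a) (hb : 0 ≤ b) (hab : b = 0 → a = 0) :
    a - b ≤ a * Real.log (a / b) := by
  rcases ha.eq_or_lt with h | h
  · simp [← h]; linarith
  · have hb' : 0 < b := by
      rcases hb.eq_or_lt with h' | h'
      · exact absurd (hab h'.symm) (ne_of_gt h)
      · exact h'
    have h1 : Real.log (b / a) ≤ b / a - 1 := Real.log_le_sub_one_of_pos (by positivity)
    have h2 : Real.log (a / b) = - Real.log (b / a) := by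
      rw [← Real.log_inv]; congr 1; field_simp
    nlinarith [mul_le_mul_of_nonneg_left h1 h.le,
      mul_div_cancel₀ b (ne_of_gt h)]

lemma ot_log_lt {a b : ℝ} (ha : 0 ≤ a) (hb : 0 ≤ b) (hab : b = 0 → a = 0) (hne : a ≠ b) :
    a - b < a * Real.log (a / b) := by
  rcases ha.eq_or_lt with h | h
  · have hb' : 0 < b := lt_of_le_of_ne hb (fun h' => hne (h.symm.trans h'))
    simp [← h]; linarith
  · have hb' : 0 < b := by
      rcases hb.eq_or_lt with h' | h'
      · exact absurd (hab h'.symm) (ne_of_gt h)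
      · exact h'
    have hba : b / a ≠ 1 := by
      intro h'; exact hne (by field_simp at h'; linarith)
    have h1 : Real.log (b / a) < b / a - 1 := Real.log_lt_sub_one_of_pos (by positivity) hba
    have h2 : Real.log (a / b) = - Real.log (b / a) := by
      rw [← Real.log_inv]; congr 1; field_simp
    nlinarith [mul_lt_mul_of_pos_left h1 h, mul_div_cancel₀ b (ne_of_gt h)]

lemma ot_gibbs {S : Type*} [Fintype S] (a b : S → ℝ) (ha : ∀ x, 0 ≤ a x) (hb : ∀ x, 0 ≤ b x)
    (hab : ∀ x, b x = 0 → a x = 0) (hsum : ∑ x, a x = ∑ x, b x) :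
    0 ≤ ∑ x, a x * Real.log (a x / b x) ∧
    (∑ x, a x * Real.log (a x / b x) = 0 → a = b) := by
  have key : ∀ x, a x - b x ≤ a x * Real.log (a x / b x) :=
    fun x => ot_log_le (ha x) (hb x) (hab x)
  have h0 : (0:ℝ) = ∑ x, (a x - b x) := by rw [Finset.sum_sub_distrib, hsum]; ring
  constructor
  · rw [h0]; exact Finset.sum_le_sum fun x _ => key x
  · intro heq
    have hz : ∑ x, (a x * Real.log (a x / b x) - (a x - b x)) = 0 := by
      rw [Finset.sum_sub_distrib, heq, Finset.sum_sub_distrib, hsum]; ring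
    have := (Finset.sum_eq_zero_iff_of_nonneg
      (fun x _ => sub_nonneg.2 (key x))).1 hz
    funext x
    by_contra hne
    have := this x (Finset.mem_univ x)
    have hlt := ot_log_lt (ha x) (hb x) (hab x) hne
    linarith

lemma ot_log_split {t m r : ℝ} (ht : 0 ≤ t) (hm : 0 < m) (hr : 0 < r) :
    t * Real.log (t / m) = t * Real.log (t / r) - t * Real.log (m / r) := by
  rcases ht.eq_or_lt with h | h
  · simp [← h]
  · rw [Real.log_div (ne_of_gt h) (ne_of_gt hm), Real.log_div (ne_of_gt h) (ne_of_gt hr),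
      Real.log_div (ne_of_gt hm) (ne_of_gt hr)]
    ring

lemma ot_mid_le {a b r : ℝ} (ha : 0 ≤ a) (hb : 0 ≤ b) (hr : 0 < r) :
    ((a + b) / 2) * Real.log (((a + b) / 2) / r)
      ≤ (a * Real.log (a / r) + b * Real.log (b / r)) / 2 := by
  set m := (a + b) / 2 with hm
  rcases eq_or_lt_of_le (by positivity : (0:ℝ) ≤ m) with h | h
  · have ha0 : a = 0 := by rw [hm] at h; linarith
    have hb0 : b = 0 := by rw [hm] at h; linarith
    simp [← h, ha0, hb0]
  · have h1 : a - m ≤ a * Real.log (a / m) := ot_log_le ha h.le (fun h' => absurd h' (ne_of_gt h))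
    have h2 : b - m ≤ b * Real.log (b / m) := ot_log_le hb h.le (fun h' => absurd h' (ne_of_gt h))
    rw [ot_log_split ha h hr, ot_log_split hb h hr] at *
    have hmr : a * Real.log (m / r) + b * Real.log (m / r) = 2 * (m * Real.log (m / r)) := by
      rw [hm]; ring
    linarith

lemma ot_mid_lt {a b r : ℝ} (ha : 0 ≤ a) (hb : 0 ≤ b) (hr : 0 < r) (hne : a ≠ b) :
    ((a + b) / 2) * Real.log (((a + b) / 2) / r)
      < (a * Real.log (a / r) + b * Real.log (b / r)) / 2 := by
  set m := (a + b) / 2 with hm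
  have h : 0 < m := by
    rcases eq_or_lt_of_le (by positivity : (0:ℝ) ≤ m) with h | h
    · exfalso; apply hne
      have ha0 : a = 0 := by rw [hm] at h; linarith
      have hb0 : b = 0 := by rw [hm] at h; linarith
      rw [ha0, hb0]
    · exact h
  have hnem : a ≠ m := by rw [hm]; intro h'; apply hne; linarith
  have h1 : a - m < a * Real.log (a / m) := ot_log_lt ha h.le (fun h' => absurd h' (ne_of_gt h)) hnem
  have h2 : b - m ≤ b * Real.log (b / m) := ot_log_le hb h.le (fun h' => absurd h' (ne_of_gt h))
  rw [ot_log_split ha h hr, ot_log_split hb h hr] at *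
  have hmr : a * Real.log (m / r) + b * Real.log (m / r) = 2 * (m * Real.log (m / r)) := by
    rw [hm]; ring
  linarith

section Keys
variable {X1 ι : Type*} [Fintype X1] [Fintype ι] [DecidableEq ι]
  {X : ι → Type*} [∀ i, Fintype (X i)] [∀ i, DecidableEq (X i)]

noncomputable def otMargin (γ : X1 × (∀ j, X j) → ℝ) (i : ι) (p : X1 × X i) : ℝ :=
  ∑ y : ∀ j, X j, if y i = p.2 then γ (p.1, y) else 0

lemma ot_key1 (γ : X1 × (∀ j, X j) → ℝ) (i : ι) (h : X1 → X i → ℝ) :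
    ∑ x : X1 × (∀ j, X j), γ x * h x.1 (x.2 i)
      = ∑ p : X1 × X i, otMargin γ i p * h p.1 p.2 := by
  rw [Fintype.sum_prod_type, Fintype.sum_prod_type]
  refine Finset.sum_congr rfl fun z _ => ?_
  simp only [otMargin, Finset.sum_mul]
  rw [Finset.sum_comm]
  refine Finset.sum_congr rfl fun y _ => ?_
  simp [ite_mul, Finset.sum_ite_eq]

lemma ot_key2 (γ : X1 × (∀ j, X j) → ℝ) (i : ι) (z : X1) :
    ∑ yi, otMargin γ i (z, yi) = ∑ y, γ (z, y) := by
  simp only [otMargin]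
  rw [Finset.sum_comm]
  refine Finset.sum_congr rfl fun y _ => ?_
  simp [Finset.sum_ite_eq]

lemma ot_key3 (γ : X1 × (∀ j, X j) → ℝ) (i : ι) (yi : X i) :
    ∑ z, otMargin γ i (z, yi) = ∑ x : X1 × (∀ j, X j), if x.2 i = yi then γ x else 0 := by
  rw [Fintype.sum_prod_type]; rfl

lemma ot_key4 (f : ∀ j, X j → ℝ) :
    ∑ y : ∀ j, X j, ∏ j, f j (y j) = ∏ j, ∑ t, f j t := by
  rw [Finset.prod_univ_sum, Fintype.piFinset_univ]

lemma ot_key5 (f : ∀ j, X j → ℝ) (i : ι) (yi : X i) :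
    ∑ y : ∀ j, X j, (if y i = yi then ∏ j, f j (y j) else 0)
      = f i yi * ∏ j ∈ Finset.univ \ {i}, ∑ t, f j t := by
  classical
  set g : ∀ j, X j → ℝ := Function.update f i (fun t => if t = yi then f i t else 0) with hgdef
  have step1 : ∀ y : ∀ j, X j,
      (if y i = yi then ∏ j, f j (y j) else 0) = ∏ j, g j (y j) := by
    intro y
    by_cases h : y i = yi
    · rw [if_pos h]
      refine Finset.prod_congr rfl fun j _ => ?_
      by_cases hj : j = i
      · subst hj; simp [hgdef, Function.update_self, h]
      · simp [hgdef, Function.update_of_ne hj]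
    · rw [if_neg h]
      refine (Finset.prod_eq_zero (Finset.mem_univ i) ?_).symm
      simp [hgdef, Function.update_self, h]
  rw [Finset.sum_congr rfl fun y _ => step1 y, ot_key4]
  have hS : (fun j => ∑ t, g j t) = Function.update (fun j => ∑ t, f j t) i (f i yi) := by
    funext j
    by_cases hj : j = i
    · subst hj
      simp [hgdef, Function.update_self, Finset.sum_ite_eq']
    · simp [hgdef, Function.update_of_ne hj]
  calc ∏ j, ∑ t, g j t = ∏ j, Function.update (fun j => ∑ t, f j t) i (f i yi) j := by
        rw [hS]
    _ = f i yi * ∏ j ∈ Finset.univ \ {i}, ∑ t, f j t :=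
        Finset.prod_update_of_mem (Finset.mem_univ i) _ _

lemma ot_margin_nonneg (γ : X1 × (∀ j, X j) → ℝ) (hg : ∀ x, 0 ≤ γ x) (i : ι) (p : X1 × X i) :
    0 ≤ otMargin γ i p :=
  Finset.sum_nonneg fun y _ => by
    split
    · exact hg _
    · exact le_refl 0

lemma ot_le_margin (γ : X1 × (∀ j, X j) → ℝ) (hg : ∀ x, 0 ≤ γ x) (i : ι)
    (x : X1 × (∀ j, X j)) : γ x ≤ otMargin γ i (x.1, x.2 i) := by
  have hnn : ∀ y ∈ (Finset.univ : Finset (∀ j, X j)),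
      (0:ℝ) ≤ if y i = x.2 i then γ (x.1, y) else 0 := by
    intro y _
    split
    · exact hg _
    · exact le_refl 0
  have := Finset.single_le_sum hnn (Finset.mem_univ x.2)
  simpa [otMargin] using this


lemma ot_glue_row (μ1 : X1 → ℝ) (hμ1 : ∀ z, 0 < μ1 z) (m : ∀ i, X1 × X i → ℝ)
    (hm : ∀ i z, ∑ t, m i (z, t) = μ1 z) (z : X1) :
    ∑ y : ∀ j, X j, μ1 z * ∏ i, (m i (z, y i) / μ1 z) = μ1 z := by
  rw [← Finset.mul_sum, ot_key4 (fun j t => m j (z, t) / μ1 z)]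
  have h1 : ∀ j, ∑ t, m j (z, t) / μ1 z = 1 := fun j => by
    rw [← Finset.sum_div, hm j z, div_self (ne_of_gt (hμ1 z))]
  rw [Finset.prod_congr rfl fun j _ => h1 j, Finset.prod_const_one, mul_one]
lemma ot_decomp (μ1 : X1 → ℝ) (μ : ∀ i, X i → ℝ) (hμ1 : ∀ z, 0 < μ1 z) (hμ : ∀ i y, 0 < μ i y)
    (w : ∀ i, X1 → X i → ℝ) (η : ℝ)
    (γ : X1 × (∀ j, X j) → ℝ) (hg0 : ∀ x, 0 ≤ γ x) :
    ∑ x, (∑ i, w i x.1 (x.2 i)) * γ x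
      + η * ∑ x, γ x * Real.log (γ x / (μ1 x.1 * ∏ i, μ i (x.2 i)))
    = (∑ i, (∑ p, w i p.1 p.2 * otMargin γ i p
        + η * ∑ p, otMargin γ i p * Real.log (otMargin γ i p / (μ1 p.1 * μ i p.2))))
      + η * ∑ x, γ x * Real.log (γ x / (μ1 x.1 * ∏ i, (otMargin γ i (x.1, x.2 i) / μ1 x.1))) := by
  have costeq : ∑ x : X1 × (∀ j, X j), (∑ i, w i x.1 (x.2 i)) * γ x
      = ∑ i, ∑ p : X1 × X i, w i p.1 p.2 * otMargin γ i p := by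
    calc ∑ x : X1 × (∀ j, X j), (∑ i, w i x.1 (x.2 i)) * γ x
        = ∑ x : X1 × (∀ j, X j), ∑ i, w i x.1 (x.2 i) * γ x := by
          exact Finset.sum_congr rfl fun x _ => Finset.sum_mul _ _ _
      _ = ∑ i, ∑ x : X1 × (∀ j, X j), w i x.1 (x.2 i) * γ x := Finset.sum_comm
      _ = ∑ i, ∑ p : X1 × X i, w i p.1 p.2 * otMargin γ i p := by
          refine Finset.sum_congr rfl fun i _ => ?_
          calc ∑ x : X1 × (∀ j, X j), w i x.1 (x.2 i) * γ x
              = ∑ x : X1 × (∀ j, X j), γ x * w i x.1 (x.2 i) := by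
                exact Finset.sum_congr rfl fun x _ => mul_comm _ _
            _ = ∑ p : X1 × X i, otMargin γ i p * w i p.1 p.2 := ot_key1 γ i (w i)
            _ = ∑ p : X1 × X i, w i p.1 p.2 * otMargin γ i p := by
                exact Finset.sum_congr rfl fun p _ => mul_comm _ _
  have pointwise : ∀ x : X1 × (∀ j, X j),
      γ x * Real.log (γ x / (μ1 x.1 * ∏ i, μ i (x.2 i)))
      = (∑ i, γ x * Real.log (otMargin γ i (x.1, x.2 i) / (μ1 x.1 * μ i (x.2 i))))
        + γ x * Real.log (γ x / (μ1 x.1 * ∏ i, (otMargin γ i (x.1, x.2 i) / μ1 x.1))) := by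
    intro x
    rcases (hg0 x).eq_or_lt with h | h
    · simp [← h]
    · have hmpos : ∀ i, 0 < otMargin γ i (x.1, x.2 i) :=
        fun i => lt_of_lt_of_le h (ot_le_margin γ hg0 i x)
      have hμ1x : 0 < μ1 x.1 := hμ1 x.1
      have hprodpos : 0 < ∏ i, μ i (x.2 i) := Finset.prod_pos fun i _ => hμ i _
      have hpp : 0 < ∏ i, (otMargin γ i (x.1, x.2 i) / μ1 x.1) :=
        Finset.prod_pos fun i _ => div_pos (hmpos i) hμ1x
      have hlog1 : Real.log (γ x / (μ1 x.1 * ∏ i, μ i (x.2 i)))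
          = Real.log (γ x) - (Real.log (μ1 x.1) + ∑ i, Real.log (μ i (x.2 i))) := by
        rw [Real.log_div (ne_of_gt h) (ne_of_gt (mul_pos hμ1x hprodpos)),
          Real.log_mul (ne_of_gt hμ1x) (ne_of_gt hprodpos),
          Real.log_prod (fun i _ => ne_of_gt (hμ i _))]
      have hlog2 : Real.log (γ x / (μ1 x.1 * ∏ i, (otMargin γ i (x.1, x.2 i) / μ1 x.1)))
          = Real.log (γ x) - (Real.log (μ1 x.1)
            + ∑ i, (Real.log (otMargin γ i (x.1, x.2 i)) - Real.log (μ1 x.1))) := by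
        rw [Real.log_div (ne_of_gt h) (ne_of_gt (mul_pos hμ1x hpp)),
          Real.log_mul (ne_of_gt hμ1x) (ne_of_gt hpp),
          Real.log_prod (fun i _ => ne_of_gt (div_pos (hmpos i) hμ1x))]
        congr 2
        exact Finset.sum_congr rfl fun i _ =>
          Real.log_div (ne_of_gt (hmpos i)) (ne_of_gt hμ1x)
      have hlog3 : ∀ i, Real.log (otMargin γ i (x.1, x.2 i) / (μ1 x.1 * μ i (x.2 i)))
          = Real.log (otMargin γ i (x.1, x.2 i))
            - (Real.log (μ1 x.1) + Real.log (μ i (x.2 i))) := fun i => by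
        rw [Real.log_div (ne_of_gt (hmpos i)) (ne_of_gt (mul_pos hμ1x (hμ i _))),
          Real.log_mul (ne_of_gt hμ1x) (ne_of_gt (hμ i _))]
      simp only [hlog1, hlog2, hlog3, ← Finset.mul_sum, Finset.sum_sub_distrib,
        Finset.sum_add_distrib]
      ring
  have enteq : ∑ x, γ x * Real.log (γ x / (μ1 x.1 * ∏ i, μ i (x.2 i)))
      = (∑ i, ∑ p : X1 × X i, otMargin γ i p
            * Real.log (otMargin γ i p / (μ1 p.1 * μ i p.2)))
        + ∑ x, γ x * Real.log (γ x / (μ1 x.1 * ∏ i, (otMargin γ i (x.1, x.2 i) / μ1 x.1))) := by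
    calc ∑ x, γ x * Real.log (γ x / (μ1 x.1 * ∏ i, μ i (x.2 i)))
        = ∑ x : X1 × (∀ j, X j), ((∑ i, γ x * Real.log (otMargin γ i (x.1, x.2 i) / (μ1 x.1 * μ i (x.2 i))))
            + γ x * Real.log (γ x / (μ1 x.1 * ∏ i, (otMargin γ i (x.1, x.2 i) / μ1 x.1)))) := by
          exact Finset.sum_congr rfl fun x _ => pointwise x
      _ = (∑ x : X1 × (∀ j, X j), ∑ i, γ x * Real.log (otMargin γ i (x.1, x.2 i) / (μ1 x.1 * μ i (x.2 i))))
          + ∑ x, γ x * Real.log (γ x / (μ1 x.1 * ∏ i, (otMargin γ i (x.1, x.2 i) / μ1 x.1))) :=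
          Finset.sum_add_distrib
      _ = (∑ i, ∑ x : X1 × (∀ j, X j), γ x * Real.log (otMargin γ i (x.1, x.2 i) / (μ1 x.1 * μ i (x.2 i))))
          + ∑ x, γ x * Real.log (γ x / (μ1 x.1 * ∏ i, (otMargin γ i (x.1, x.2 i) / μ1 x.1))) := by
          rw [Finset.sum_comm]
      _ = _ := by
          congr 1
          refine Finset.sum_congr rfl fun i _ => ?_
          exact ot_key1 γ i (fun z yi => Real.log (otMargin γ i (z, yi) / (μ1 z * μ i yi)))
  rw [costeq, enteq, Finset.sum_add_distrib, mul_add, Finset.mul_sum]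
  ring

end Keys
lemma ot_unique {A B : Type*} [Fintype A] [Fintype B] (μ1 : A → ℝ) (μ2 : B → ℝ)
    (hμ1 : ∀ z, 0 < μ1 z) (hμ2 : ∀ y, 0 < μ2 y) (w : A → B → ℝ) (η : ℝ) (hη : 0 < η)
    (πb π : A × B → ℝ) (hp0 : ∀ p, 0 ≤ π p)
    (hpm1 : ∀ z, ∑ y, π (z, y) = μ1 z) (hpm2 : ∀ y, ∑ z, π (z, y) = μ2 y)
    (hopt : ∀ ρ : A × B → ℝ, (∀ p, 0 ≤ ρ p) →
      (∀ z, ∑ y, ρ (z, y) = μ1 z) → (∀ y, ∑ z, ρ (z, y) = μ2 y) →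
      (∑ p, w p.1 p.2 * πb p + η * ∑ p, πb p * Real.log (πb p / (μ1 p.1 * μ2 p.2)))
        ≤ ∑ p, w p.1 p.2 * ρ p + η * ∑ p, ρ p * Real.log (ρ p / (μ1 p.1 * μ2 p.2)))
    (hb0 : ∀ p, 0 ≤ πb p)
    (hbm1 : ∀ z, ∑ y, πb (z, y) = μ1 z) (hbm2 : ∀ y, ∑ z, πb (z, y) = μ2 y)
    (heq : ∑ p, w p.1 p.2 * π p + η * ∑ p, π p * Real.log (π p / (μ1 p.1 * μ2 p.2))
      = ∑ p, w p.1 p.2 * πb p + η * ∑ p, πb p * Real.log (πb p / (μ1 p.1 * μ2 p.2))) :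
    π = πb := by
  by_contra hne
  obtain ⟨p0, hp0ne⟩ := Function.ne_iff.1 hne
  set ρ : A × B → ℝ := fun p => (π p + πb p) / 2 with hρ
  have hρ0 : ∀ p, 0 ≤ ρ p := fun p => by
    have := hp0 p; have := hb0 p; simp only [hρ]; linarith
  have hρm1 : ∀ z, ∑ y, ρ (z, y) = μ1 z := fun z => by
    simp only [hρ]
    rw [← Finset.sum_div, Finset.sum_add_distrib, hpm1, hbm1]; ring
  have hρm2 : ∀ y, ∑ z, ρ (z, y) = μ2 y := fun y => by
    simp only [hρ]
    rw [← Finset.sum_div, Finset.sum_add_distrib, hpm2, hbm2]; ring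
  have hcost : ∑ p, w p.1 p.2 * ρ p
      = (∑ p, w p.1 p.2 * π p + ∑ p, w p.1 p.2 * πb p) / 2 := by
    rw [← Finset.sum_add_distrib, Finset.sum_div]
    exact Finset.sum_congr rfl fun p _ => by simp only [hρ]; ring
  have hent : ∑ p, ρ p * Real.log (ρ p / (μ1 p.1 * μ2 p.2))
      < (∑ p, π p * Real.log (π p / (μ1 p.1 * μ2 p.2))
          + ∑ p, πb p * Real.log (πb p / (μ1 p.1 * μ2 p.2))) / 2 := by
    rw [← Finset.sum_add_distrib, Finset.sum_div]
    refine Finset.sum_lt_sum (fun p _ => ?_) ⟨p0, Finset.mem_univ p0, ?_⟩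
    · exact ot_mid_le (hp0 p) (hb0 p) (mul_pos (hμ1 p.1) (hμ2 p.2))
    · exact ot_mid_lt (hp0 p0) (hb0 p0) (mul_pos (hμ1 p0.1) (hμ2 p0.2)) hp0ne
  have hlt := hopt ρ hρ0 hρm1 hρm2
  rw [hcost] at hlt
  have := mul_lt_mul_of_pos_left hent hη
  linarith


/-- For the star-shaped cost `c(x¹,...,xᵐ) = ∑_{i≥2} w(x¹,xⁱ)` and `η > 0`, the unique
minimizer of the entropic multi-marginal problem over `Π(μ¹,...,μᵐ)` is the gluing of the
optimal two-marginal entropic plans `π̄ⁱ` along the common first marginal `μ¹`. -/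
theorem stmt_4 {X1 : Type*} {ι : Type*} [Fintype X1] [DecidableEq X1]
    [Fintype ι] [DecidableEq ι]
    {X : ι → Type*} [∀ i, Fintype (X i)] [∀ i, DecidableEq (X i)]
    (μ1 : X1 → ℝ) (μ : ∀ i, X i → ℝ)
    (hμ1 : ∀ z, 0 < μ1 z) (hμ1s : ∑ z, μ1 z = 1)
    (hμ : ∀ i y, 0 < μ i y) (hμs : ∀ i, ∑ y, μ i y = 1)
    (w : ∀ i, X1 → X i → ℝ) (η : ℝ) (hη : 0 < η)
    (πb : ∀ i, X1 × X i → ℝ)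
    (hπ0 : ∀ i p, 0 ≤ πb i p)
    (hπm1 : ∀ i z, ∑ y, πb i (z, y) = μ1 z)
    (hπm2 : ∀ i y, ∑ z, πb i (z, y) = μ i y)
    (hπopt : ∀ i (π : X1 × X i → ℝ), (∀ p, 0 ≤ π p) →
      (∀ z, ∑ y, π (z, y) = μ1 z) → (∀ y, ∑ z, π (z, y) = μ i y) →
      (∑ p, w i p.1 p.2 * πb i p
          + η * ∑ p, πb i p * Real.log (πb i p / (μ1 p.1 * μ i p.2)))
        ≤ ∑ p, w i p.1 p.2 * π p
          + η * ∑ p, π p * Real.log (π p / (μ1 p.1 * μ i p.2)))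
    (γb : X1 × (∀ i, X i) → ℝ)
    (hγb : ∀ x, γb x = μ1 x.1 * ∏ i, (πb i (x.1, x.2 i) / μ1 x.1)) :
    ((∀ x, 0 ≤ γb x) ∧ (∀ z, ∑ y, γb (z, y) = μ1 z) ∧
      (∀ i yi, (∑ x : X1 × (∀ j, X j), if x.2 i = yi then γb x else 0) = μ i yi)) ∧
    ∀ γ : X1 × (∀ i, X i) → ℝ, (∀ x, 0 ≤ γ x) →
      (∀ z, ∑ y, γ (z, y) = μ1 z) →
      (∀ i yi, (∑ x : X1 × (∀ j, X j), if x.2 i = yi then γ x else 0) = μ i yi) →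
      ((∑ x, (∑ i, w i x.1 (x.2 i)) * γb x
          + η * ∑ x, γb x * Real.log (γb x / (μ1 x.1 * ∏ i, μ i (x.2 i))))
        ≤ (∑ x, (∑ i, w i x.1 (x.2 i)) * γ x
          + η * ∑ x, γ x * Real.log (γ x / (μ1 x.1 * ∏ i, μ i (x.2 i))))
        ∧ ((∑ x, (∑ i, w i x.1 (x.2 i)) * γ x
            + η * ∑ x, γ x * Real.log (γ x / (μ1 x.1 * ∏ i, μ i (x.2 i))))
          = (∑ x, (∑ i, w i x.1 (x.2 i)) * γb x
            + η * ∑ x, γb x * Real.log (γb x / (μ1 x.1 * ∏ i, μ i (x.2 i))))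
          → γ = γb)) := by
  classical
  -- nonnegativity of γb
  have hγb0 : ∀ x, 0 ≤ γb x := fun x => by
    rw [hγb x]
    exact mul_nonneg (hμ1 x.1).le
      (Finset.prod_nonneg fun j _ => div_nonneg (hπ0 j _) (hμ1 x.1).le)
  -- first marginal of γb
  have hγb1 : ∀ z, ∑ y, γb (z, y) = μ1 z := by
    intro z
    have h1 : ∀ y : ∀ j, X j, γb (z, y) = μ1 z * ∏ j, (πb j (z, y j) / μ1 z) :=
      fun y => hγb (z, y)
    rw [Finset.sum_congr rfl fun y _ => h1 y]
    exact ot_glue_row μ1 hμ1 πb hπm1 z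
  -- margins of γb are the πb
  have hmb : ∀ (i : ι) (p : X1 × X i), otMargin γb i p = πb i p := by
    intro i p
    have h1 : otMargin γb i p
        = ∑ y : ∀ j, X j, (if y i = p.2 then μ1 p.1 * ∏ j, (πb j (p.1, y j) / μ1 p.1) else 0) := by
      unfold otMargin
      exact Finset.sum_congr rfl fun y _ => by rw [hγb (p.1, y)]
    have h2 : ∀ y : ∀ j, X j,
        (if y i = p.2 then μ1 p.1 * ∏ j, (πb j (p.1, y j) / μ1 p.1) else 0)
        = μ1 p.1 * (if y i = p.2 then ∏ j, (πb j (p.1, y j) / μ1 p.1) else 0) := fun y => by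
      split <;> simp
    rw [h1, Finset.sum_congr rfl fun y _ => h2 y, ← Finset.mul_sum,
      ot_key5 (fun j t => πb j (p.1, t) / μ1 p.1) i p.2]
    have hone : ∀ j, ∑ t, πb j (p.1, t) / μ1 p.1 = 1 := fun j => by
      rw [← Finset.sum_div, hπm1 j p.1, div_self (ne_of_gt (hμ1 p.1))]
    rw [Finset.prod_congr rfl (fun j _ => hone j), Finset.prod_const_one, mul_one,
      mul_div_cancel₀ _ (ne_of_gt (hμ1 p.1))]
  -- second marginals of γb
  have hγb2 : ∀ i yi, (∑ x : X1 × (∀ j, X j), if x.2 i = yi then γb x else 0) = μ i yi := by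
    intro i yi
    rw [← ot_key3 γb i yi, Finset.sum_congr rfl fun z _ => hmb i (z, yi)]
    exact hπm2 i yi
  refine ⟨⟨hγb0, hγb1, hγb2⟩, ?_⟩
  intro γ hg0 hg1 hg2
  -- margins of γ
  have mg0 : ∀ i p, 0 ≤ otMargin γ i p := fun i p => ot_margin_nonneg γ hg0 i p
  have mg1 : ∀ i z, ∑ yi, otMargin γ i (z, yi) = μ1 z := fun i z => by
    rw [ot_key2]; exact hg1 z
  have mg2 : ∀ i yi, ∑ z, otMargin γ i (z, yi) = μ i yi := fun i yi => by
    rw [ot_key3]; exact hg2 i yi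
  -- decompositions
  have Dγ := ot_decomp μ1 μ hμ1 hμ w η γ hg0
  have Dγb := ot_decomp μ1 μ hμ1 hμ w η γb hγb0
  -- the KL term of γb vanishes
  have hKLb : ∑ x, γb x
      * Real.log (γb x / (μ1 x.1 * ∏ i, (otMargin γb i (x.1, x.2 i) / μ1 x.1))) = 0 := by
    refine Finset.sum_eq_zero fun x _ => ?_
    have h1 : μ1 x.1 * ∏ i, (otMargin γb i (x.1, x.2 i) / μ1 x.1) = γb x := by
      rw [hγb x]
      congr 1
      exact Finset.prod_congr rfl fun i _ => by rw [hmb]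
    rw [h1]
    rcases (hγb0 x).eq_or_lt with h | h
    · rw [← h]; simp
    · rw [div_self (ne_of_gt h), Real.log_one, mul_zero]
  rw [hKLb, mul_zero, add_zero] at Dγb
  simp only [hmb] at Dγb
  -- Gibbs inequality for γ against its gluing
  have hsγ : ∑ x : X1 × (∀ j, X j), γ x = ∑ z, μ1 z := by
    rw [Fintype.sum_prod_type]; exact Finset.sum_congr rfl fun z _ => hg1 z
  have hsgl : ∑ x : X1 × (∀ j, X j), μ1 x.1 * ∏ i, (otMargin γ i (x.1, x.2 i) / μ1 x.1)
      = ∑ z, μ1 z := by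
    rw [Fintype.sum_prod_type]
    exact Finset.sum_congr rfl fun z _ => ot_glue_row μ1 hμ1 (otMargin γ) mg1 z
  have habs : ∀ x : X1 × (∀ j, X j),
      μ1 x.1 * ∏ i, (otMargin γ i (x.1, x.2 i) / μ1 x.1) = 0 → γ x = 0 := by
    intro x hx
    rcases mul_eq_zero.mp hx with h | h
    · exact absurd h (ne_of_gt (hμ1 x.1))
    · obtain ⟨i, -, hi⟩ := Finset.prod_eq_zero_iff.mp h
      rcases div_eq_zero_iff.mp hi with h' | h'
      · have := ot_le_margin γ hg0 i x
        have := hg0 x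
        linarith
      · exact absurd h' (ne_of_gt (hμ1 x.1))
  obtain ⟨hKLnn, hKLeq⟩ := ot_gibbs γ
    (fun x => μ1 x.1 * ∏ i, (otMargin γ i (x.1, x.2 i) / μ1 x.1)) hg0
    (fun x => mul_nonneg (hμ1 x.1).le
      (Finset.prod_nonneg fun j _ => div_nonneg (mg0 j _) (hμ1 x.1).le))
    habs (by rw [hsγ, hsgl])
  have hKLnn' : 0 ≤ ∑ x, γ x
      * Real.log (γ x / (μ1 x.1 * ∏ i, (otMargin γ i (x.1, x.2 i) / μ1 x.1))) := hKLnn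
  -- per-coordinate optimality
  have hle : ∀ i : ι,
      (∑ p, w i p.1 p.2 * πb i p
        + η * ∑ p, πb i p * Real.log (πb i p / (μ1 p.1 * μ i p.2)))
      ≤ ∑ p, w i p.1 p.2 * otMargin γ i p
        + η * ∑ p, otMargin γ i p * Real.log (otMargin γ i p / (μ1 p.1 * μ i p.2)) :=
    fun i => hπopt i (otMargin γ i) (mg0 i) (mg1 i) (mg2 i)
  have hsumle : (∑ i, (∑ p, w i p.1 p.2 * πb i p
        + η * ∑ p, πb i p * Real.log (πb i p / (μ1 p.1 * μ i p.2))))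
      ≤ ∑ i, (∑ p, w i p.1 p.2 * otMargin γ i p
        + η * ∑ p, otMargin γ i p * Real.log (otMargin γ i p / (μ1 p.1 * μ i p.2))) :=
    Finset.sum_le_sum fun i _ => hle i
  have hηKL : 0 ≤ η * ∑ x, γ x
      * Real.log (γ x / (μ1 x.1 * ∏ i, (otMargin γ i (x.1, x.2 i) / μ1 x.1))) :=
    mul_nonneg hη.le hKLnn'
  constructor
  · rw [Dγ, Dγb]; linarith
  · intro heq
    rw [Dγ, Dγb] at heq
    -- deduce KL = 0 and per-i equality
    have hKL0 : ∑ x, γ x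
        * Real.log (γ x / (μ1 x.1 * ∏ i, (otMargin γ i (x.1, x.2 i) / μ1 x.1))) = 0 := by
      nlinarith
    have hObj : (∑ i, (∑ p, w i p.1 p.2 * otMargin γ i p
        + η * ∑ p, otMargin γ i p * Real.log (otMargin γ i p / (μ1 p.1 * μ i p.2))))
        = ∑ i, (∑ p, w i p.1 p.2 * πb i p
        + η * ∑ p, πb i p * Real.log (πb i p / (μ1 p.1 * μ i p.2))) := by
      rw [hKL0, mul_zero, add_zero] at heq
      exact heq
    have hdiff : ∀ i ∈ (Finset.univ : Finset ι),
        ((∑ p, w i p.1 p.2 * otMargin γ i p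
          + η * ∑ p, otMargin γ i p * Real.log (otMargin γ i p / (μ1 p.1 * μ i p.2)))
        - (∑ p, w i p.1 p.2 * πb i p
          + η * ∑ p, πb i p * Real.log (πb i p / (μ1 p.1 * μ i p.2)))) = 0 := by
      refine (Finset.sum_eq_zero_iff_of_nonneg fun i _ => sub_nonneg.2 (hle i)).1 ?_
      rw [Finset.sum_sub_distrib, hObj, sub_self]
    have hmeq : ∀ i, otMargin γ i = πb i := by
      intro i
      refine ot_unique μ1 (μ i) hμ1 (hμ i) (w i) η hη (πb i) (otMargin γ i)
        (mg0 i) (mg1 i) (mg2 i) (hπopt i) (hπ0 i) (hπm1 i) (hπm2 i) ?_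
      have := hdiff i (Finset.mem_univ i)
      linarith
    have hγgl := hKLeq hKL0
    funext x
    have h1 : γ x = μ1 x.1 * ∏ i, (otMargin γ i (x.1, x.2 i) / μ1 x.1) := congrFun hγgl x
    rw [h1, hγb x]
    congr 1
    exact Finset.prod_congr rfl fun i _ => by rw [hmeq i]
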